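/- Let d, μ, L ∈ ℝ with d > 0, μ > 0, and L > d. In ℝ² let R = (0, 0), C′ = (0, d), N′ = (L, 0), and let v = μ • (√3/2, −1/2). Set C = C′ + v and, for t ∈ [0, 1], N = N′ + t • v. Then ⟪C − R, N − R⟫ > 0; that is, the angle ∠NRC is strictly less than 90°. -/

import Mathlib

open scoped RealInnerProductSpace

/-- The point of `ℝ² = EuclideanSpace ℝ (Fin 2)` with coordinates `(x, y)`. -/
def pt (x y : ℝ) : EuclideanSpace ℝ (Fin 2) := WithLp.toLp 2 ![x, y]

/-- Phase-4 claim for destination `D₃` (Figure 5): with `R` at the origin,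
`C′ = (0, d)`, `N′ = (L, 0)` with `L > d`, after the Commander moves by
`v = μ • (√3/2, −1/2)` to `C = C′ + v`, at every intermediate position
`N = N′ + t • v` (`t ∈ [0,1]`) of the Number robot the angle `∠NRC` stays
acute, i.e. `⟪C − R, N − R⟫ > 0`. -/
theorem turingmobile_phase4_angle_acute
    (d μ L : ℝ) (hd : 0 < d) (hμ : 0 < μ) (hL : d < L)
    (R C' N' v C : EuclideanSpace ℝ (Fin 2))
    (hR : R = pt 0 0) (hC' : C' = pt 0 d) (hN' : N' = pt L 0)
    (hv : v = μ • pt (Real.sqrt 3 / 2) (-(1 / 2)))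
    (hC : C = C' + v) :
    ∀ t ∈ Set.Icc (0 : ℝ) 1, ∀ N : EuclideanSpace ℝ (Fin 2),
      N = N' + t • v → 0 < ⟪C - R, N - R⟫ := by
  rintro t ⟨ht0, ht1⟩ N hN
  subst hR hC' hN' hv hC hN
  have hs : (1 : ℝ) ≤ Real.sqrt 3 := by
    nlinarith [Real.sq_sqrt (by norm_num : (3:ℝ) ≥ 0), Real.sqrt_nonneg 3]
  simp only [pt, PiLp.inner_apply, Fin.sum_univ_two, PiLp.sub_apply, PiLp.add_apply,
    PiLp.smul_apply, Matrix.cons_val_zero, Matrix.cons_val_one, Matrix.head_cons,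
    RCLike.inner_apply, conj_trivial, smul_eq_mul, PiLp.toLp_apply]
  have h1 : 0 ≤ (1 - t) * μ * d :=
    mul_nonneg (mul_nonneg (sub_nonneg.2 ht1) hμ.le) hd.le
  have h2 : 0 ≤ (Real.sqrt 3 - 1) * (μ * L) :=
    mul_nonneg (sub_nonneg.2 hs) (mul_nonneg hμ.le (hd.trans hL).le)
  have h3 : 0 ≤ t * μ * μ := by positivity
  nlinarith [mul_pos hμ (sub_pos.2 hL), Real.sq_sqrt (show (0:ℝ) ≤ 3 by norm_num)]
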